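/- Let A be a graded-commutative DGA over ℚ, n ≥ 2, a ∈ A₁ with da = 0, r ∈ A₀, b := a − dr, and ρ_k ∈ A₁ (1 ≤ k ≤ n) with dρ_k = ρ_{k−1}·a (convention ρ₀ := 0). For 2 ≤ m ≤ n set P_m := Σ_{k=0}^{m−1} (1/k!) ρ_{m−k}·r^k and P₁ := ρ₁. Then dP_m = P_{m−1}·b for every m with 2 ≤ m ≤ n. Moreover b·b = 0, so that for any r' ∈ A₀ one has (ρ₂ + ρ₁·r − r'·b)·b = P₂·b; in particular dP₃ = P̃₂·b with P̃₂ := ρ₂ + ρ₁·r − r'·b, as in equations (2) and (3) of the paper. -/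

import Mathlib

noncomputable section

/-- A graded-commutative differential graded algebra over `ℚ`. -/
structure GCDGA (A : Type*) [Ring A] [Algebra ℚ A] where
  deg : ℤ → Submodule ℚ A
  decomp : DirectSum.Decomposition deg
  one_mem : (1 : A) ∈ deg 0
  mul_mem : ∀ {i j : ℤ} {x y : A}, x ∈ deg i → y ∈ deg j → x * y ∈ deg (i + j)
  d : A →ₗ[ℚ] A
  d_sq : ∀ x : A, d (d x) = 0
  d_deg : ∀ {i : ℤ} {x : A}, x ∈ deg i → d x ∈ deg (i + 1)
  leibniz : ∀ {i : ℤ} (x y : A), x ∈ deg i →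
    d (x * y) = d x * y + ((-1 : ℚ) ^ i) • (x * d y)
  gcomm : ∀ {i j : ℤ} (x y : A), x ∈ deg i → y ∈ deg j →
    x * y = ((-1 : ℚ) ^ (i * j)) • (y * x)

/-- `P_m := ∑_{k=0}^{m−1} (1/k!) ρ_{m−k} · r^k` (so `P₁ = ρ₁`). -/
def Pm {A : Type*} [Ring A] [Algebra ℚ A] (ρ : ℕ → A) (r : A) (m : ℕ) : A :=
  ∑ k ∈ Finset.range m, ((k.factorial : ℚ))⁻¹ • (ρ (m - k) * r ^ k)

/-- `dP_m = P_{m−1}·b` for `2 ≤ m ≤ n`; moreover `b·b = 0`, so for any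
`r' ∈ A₀` one has `(ρ₂ + ρ₁·r − r'·b)·b = P₂·b`, and in particular
`dP₃ = P̃₂·b` with `P̃₂ := ρ₂ + ρ₁·r − r'·b` (when `3 ≤ n`). -/
theorem dPm_eq_Pm_pred_mul_b {A : Type*} [Ring A] [Algebra ℚ A] (G : GCDGA A)
    (n : ℕ) (hn : 2 ≤ n)
    (a : A) (ha : a ∈ G.deg 1) (hda : G.d a = 0)
    (r : A) (hr : r ∈ G.deg 0)
    (ρ : ℕ → A) (hρ0 : ρ 0 = 0)
    (hρ : ∀ k, 1 ≤ k → k ≤ n → ρ k ∈ G.deg 1)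
    (hdρ : ∀ k, 1 ≤ k → k ≤ n → G.d (ρ k) = ρ (k - 1) * a)
    (b : A) (hb : b = a - G.d r) :
    (∀ m, 2 ≤ m → m ≤ n → G.d (Pm ρ r m) = Pm ρ r (m - 1) * b) ∧
    b * b = 0 ∧
    (∀ r' : A, r' ∈ G.deg 0 →
      (ρ 2 + ρ 1 * r - r' * b) * b = Pm ρ r 2 * b ∧
      (3 ≤ n → G.d (Pm ρ r 3) = (ρ 2 + ρ 1 * r - r' * b) * b)) := by
  -- `d 1 = 0`
  have hd1 : G.d (1 : A) = 0 := by
    have h := G.leibniz (1 : A) (1 : A) G.one_mem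
    simp only [mul_one, one_mul, zpow_zero, one_smul] at h
    exact (left_eq_add.mp h)
  -- commutation facts
  have hra : r * a = a * r := by
    have h := G.gcomm a r ha hr
    simpa using h.symm
  have hdr1 : G.d r ∈ G.deg 1 := by simpa using G.d_deg hr
  have hrdr : r * G.d r = G.d r * r := by
    have h := G.gcomm (G.d r) r hdr1 hr
    simpa using h.symm
  have hpow : ∀ (y : A), r * y = y * r → ∀ k, r ^ k * y = y * r ^ k := by
    intro y hy k
    induction k with
    | zero => simp
    | succ k ih =>
        rw [pow_succ, mul_assoc, hy, ← mul_assoc, ih, mul_assoc]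
  have hpa : ∀ k, r ^ k * a = a * r ^ k := hpow a hra
  have hpd : ∀ k, r ^ k * G.d r = G.d r * r ^ k := hpow (G.d r) hrdr
  -- derivative of powers of `r`
  have hdrk : ∀ k : ℕ, G.d (r ^ (k + 1)) = ((k + 1 : ℕ) : ℚ) • (G.d r * r ^ k) := by
    intro k
    induction k with
    | zero => simp
    | succ k ih =>
        have h := G.leibniz r (r ^ (k + 1)) hr
        rw [← pow_succ'] at h
        rw [h, ih]
        simp only [zpow_zero, one_smul, mul_smul_comm]
        rw [← mul_assoc, hrdr, mul_assoc, ← pow_succ']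
        push_cast
        module
  -- `b * b = 0`
  have hb1 : b ∈ G.deg 1 := by
    rw [hb]; exact sub_mem ha hdr1
  have hbb : b * b = 0 := by
    have h := G.gcomm b b hb1 hb1
    simp only [one_mul, zpow_one, neg_smul, one_smul] at h
    have h2 : (2 : ℚ) • (b * b) = 0 := by
      rw [two_smul]
      nth_rewrite 1 [h]
      simp
    have := smul_eq_zero.mp h2
    simpa using this
  -- main statement
  have main : ∀ m, 2 ≤ m → m ≤ n → G.d (Pm ρ r m) = Pm ρ r (m - 1) * b := by
    intro m hm2 hmn
    obtain ⟨m', rfl⟩ : ∃ m', m = m' + 1 := ⟨m - 1, by omega⟩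
    have hm'1 : 1 ≤ m' := by omega
    simp only [Nat.add_sub_cancel]
    have key : ∀ k ∈ Finset.range (m' + 1),
        ((k.factorial : ℚ))⁻¹ • G.d (ρ (m' + 1 - k) * r ^ k)
          = ((k.factorial : ℚ))⁻¹ • (ρ (m' - k) * a * r ^ k)
            - ((k.factorial : ℚ))⁻¹ • (ρ (m' + 1 - k) * G.d (r ^ k)) := by
      intro k hk
      rw [Finset.mem_range] at hk
      have h1 : 1 ≤ m' + 1 - k := by omega
      have h2 : m' + 1 - k ≤ n := by omega
      have hsub : m' + 1 - k - 1 = m' - k := by omega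
      rw [G.leibniz (ρ (m' + 1 - k)) (r ^ k) (hρ _ h1 h2), hdρ _ h1 h2, hsub]
      simp only [zpow_one, neg_smul, one_smul]
      rw [smul_add, smul_neg, ← sub_eq_add_neg]
    have hS1 : (∑ k ∈ Finset.range (m' + 1),
          ((k.factorial : ℚ))⁻¹ • (ρ (m' - k) * a * r ^ k))
        = ∑ k ∈ Finset.range m', ((k.factorial : ℚ))⁻¹ • (ρ (m' - k) * a * r ^ k) := by
      rw [Finset.sum_range_succ]
      simp [hρ0]
    have hS2 : (∑ k ∈ Finset.range (m' + 1),
          ((k.factorial : ℚ))⁻¹ • (ρ (m' + 1 - k) * G.d (r ^ k)))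
        = ∑ k ∈ Finset.range m',
            ((k.factorial : ℚ))⁻¹ • (ρ (m' - k) * (G.d r * r ^ k)) := by
      rw [Finset.sum_range_succ']
      simp only [pow_zero, hd1, mul_zero, smul_zero, add_zero]
      refine Finset.sum_congr rfl fun k hk => ?_
      rw [Finset.mem_range] at hk
      have hsub : m' + 1 - (k + 1) = m' - k := by omega
      rw [hsub, hdrk k, mul_smul_comm, smul_smul]
      congr 1
      have hk0 : ((k + 1 : ℕ) : ℚ) ≠ 0 := by positivity
      have hf0 : ((k.factorial : ℕ) : ℚ) ≠ 0 := Nat.cast_ne_zero.mpr k.factorial_ne_zero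
      rw [Nat.factorial_succ]
      push_cast
      field_simp
    calc G.d (Pm ρ r (m' + 1))
        = ∑ k ∈ Finset.range (m' + 1),
            ((k.factorial : ℚ))⁻¹ • G.d (ρ (m' + 1 - k) * r ^ k) := by
          rw [Pm, map_sum]; simp only [map_smul]
      _ = (∑ k ∈ Finset.range (m' + 1),
            ((k.factorial : ℚ))⁻¹ • (ρ (m' - k) * a * r ^ k))
          - ∑ k ∈ Finset.range (m' + 1),
            ((k.factorial : ℚ))⁻¹ • (ρ (m' + 1 - k) * G.d (r ^ k)) := by
          rw [← Finset.sum_sub_distrib]; exact Finset.sum_congr rfl key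
      _ = (∑ k ∈ Finset.range m', ((k.factorial : ℚ))⁻¹ • (ρ (m' - k) * a * r ^ k))
          - ∑ k ∈ Finset.range m',
            ((k.factorial : ℚ))⁻¹ • (ρ (m' - k) * (G.d r * r ^ k)) := by
          rw [hS1, hS2]
      _ = ∑ k ∈ Finset.range m',
            (((k.factorial : ℚ))⁻¹ • (ρ (m' - k) * a * r ^ k)
              - ((k.factorial : ℚ))⁻¹ • (ρ (m' - k) * (G.d r * r ^ k))) :=
          (Finset.sum_sub_distrib _ _).symm
      _ = Pm ρ r m' * b := by
          rw [Pm, Finset.sum_mul]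
          refine (Finset.sum_congr rfl fun k _ => ?_).symm
          rw [smul_mul_assoc, hb, mul_sub, mul_assoc, mul_assoc, hpa k, hpd k,
            ← mul_assoc (ρ (m' - k)) a, smul_sub]
  refine ⟨main, hbb, ?_⟩
  intro r' _
  have hP2 : Pm ρ r 2 = ρ 2 + ρ 1 * r := by
    simp [Pm, Finset.sum_range_succ, Nat.factorial]
  have hmain2 : (ρ 2 + ρ 1 * r - r' * b) * b = Pm ρ r 2 * b := by
    rw [hP2, sub_mul, mul_assoc, hbb, mul_zero, sub_zero]
  refine ⟨hmain2, fun h3 => ?_⟩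
  have h := main 3 (by norm_num) h3
  norm_num at h
  rw [h, hmain2]

end
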